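/- Let k be a field of characteristic zero, k[X_1, …, X_n] a polynomial ring, and f_1, …, f_n ∈ k[X_1, …, X_n] with Jacobian determinant det(∂f_i/∂X_j) a nonzero element of k. Then k[X_1, …, X_n] is unramified over the subring k[f_1, …, f_n], and f_1, …, f_n are algebraically independent over k. -/

import Mathlib

open MvPolynomial

/-- Matrix-smul lemma: if an invertible matrix kills a vector in a module, the vector is zero. -/
lemma aux_matrix_smul_zero {R M : Type*} [CommRing R] [AddCommGroup M] [Module R M] {n : ℕ}
    (J : Matrix (Fin n) (Fin n) R) (hJ : IsUnit J.det) (v : Fin n → M)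
    (h : ∀ i, ∑ j, J i j • v j = 0) (l : Fin n) : v l = 0 := by
  have hdet : J.det • v l = 0 := by
    calc J.det • v l = ∑ j, (J.adjugate * J) l j • v j := by
          rw [Matrix.adjugate_mul]
          simp [Matrix.smul_apply, Matrix.one_apply, Finset.sum_ite_eq']
      _ = ∑ j, ∑ i, J.adjugate l i • (J i j • v j) := by
          simp [Matrix.mul_apply, Finset.sum_smul, mul_smul]
      _ = ∑ i, J.adjugate l i • (∑ j, J i j • v j) := by
          rw [Finset.sum_comm]; simp [Finset.smul_sum]
      _ = 0 := by simp [h]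
  have h2 : hJ.unit • v l = 0 := by rw [Units.smul_def, hJ.unit_spec, hdet]
  calc v l = hJ.unit⁻¹ • (hJ.unit • v l) := (inv_smul_smul _ _).symm
    _ = 0 := by rw [h2, smul_zero]

lemma aux_chain {k : Type*} [CommRing k] {n : ℕ} (f : Fin n → MvPolynomial (Fin n) k)
    (p : MvPolynomial (Fin n) k) (j : Fin n) :
    pderiv j (aeval f p) = ∑ i, aeval f (pderiv i p) * pderiv j (f i) := by
  induction p using MvPolynomial.induction_on with
  | C a => simp
  | add p q hp hq =>
      simp only [map_add, hp, hq, add_mul, Finset.sum_add_distrib]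
  | mul_X p s hp =>
      simp only [map_mul, aeval_X, Derivation.leibniz, pderiv_X, smul_eq_mul, map_add,
        Pi.single_apply, hp, apply_ite (aeval f), map_one, map_zero, mul_ite, mul_one, mul_zero,
        add_mul, ite_mul, zero_mul, Finset.sum_add_distrib, Finset.sum_ite_eq', Finset.mem_univ,
        if_true, Finset.mul_sum]
      ring_nf
      rw [add_comm]
      congr 1
      rw [Finset.sum_ite_eq Finset.univ s (fun x => aeval f p * pderiv j (f x))]
      simp

lemma aux_coeff_pderiv {k : Type*} [CommRing k] {n : ℕ} (p : MvPolynomial (Fin n) k)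
    (i : Fin n) (m : Fin n →₀ ℕ) :
    coeff m (pderiv i p) = ((m i : k) + 1) * coeff (m + Finsupp.single i 1) p := by
  induction p using MvPolynomial.induction_on' with
  | add p q hp hq => simp [hp, hq, mul_add]
  | monomial s a =>
      rw [pderiv_monomial, coeff_monomial, coeff_monomial]
      by_cases hs : s = m + Finsupp.single i 1
      · subst hs
        rw [if_pos, if_pos rfl]
        · push_cast [Finsupp.add_apply, Finsupp.single_apply]
          simp
          ring
        · ext j
          simp [Finsupp.tsub_apply, Finsupp.add_apply, Finsupp.single_apply]
      · rw [if_neg hs]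
        by_cases hs2 : s - Finsupp.single i 1 = m
        · by_cases hsi : s i = 0
          · simp [hsi]
          · exfalso
            apply hs
            ext j
            have := DFunLike.congr_fun hs2 j
            simp only [Finsupp.tsub_apply, Finsupp.single_apply, Finsupp.add_apply] at this ⊢
            rcases eq_or_ne i j with rfl | hij
            · simp only [if_pos rfl, if_true] at this ⊢
              omega
            · simp only [if_neg hij] at this ⊢
              omega
        · simp [hs2]

lemma aux_eq_C_of_pderiv {k : Type*} [Field k] [CharZero k] {n : ℕ}
    (p : MvPolynomial (Fin n) k) (h : ∀ i, pderiv i p = (0 : MvPolynomial (Fin n) k)) :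
    p = C (constantCoeff p) := by
  ext m
  rcases eq_or_ne m 0 with rfl | hm
  · simp [coeff_C, constantCoeff_eq]
  · rw [coeff_C, if_neg (Ne.symm hm)]
    obtain ⟨i, hi⟩ : ∃ i, m i ≠ 0 := by
      by_contra hc
      push_neg at hc
      exact hm (Finsupp.ext hc)
    have key := aux_coeff_pderiv p i (m - Finsupp.single i 1)
    rw [h i, coeff_zero] at key
    have hms : m - Finsupp.single i 1 + Finsupp.single i 1 = m := by
      ext j
      simp only [Finsupp.add_apply, Finsupp.tsub_apply, Finsupp.single_apply]
      rcases eq_or_ne i j with rfl | hij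
      · simp only [if_pos rfl, if_true]; omega
      · simp only [if_neg hij]; omega
    rw [hms] at key
    exact (mul_eq_zero.mp key.symm).resolve_left (Nat.cast_add_one_ne_zero _)

lemma aux_totalDegree_pderiv_lt {k : Type*} [Field k] [CharZero k] {n : ℕ}
    (p : MvPolynomial (Fin n) k) (i : Fin n) (h : pderiv i p ≠ 0) :
    (pderiv i p).totalDegree < p.totalDegree := by
  have hd : ∀ m ∈ (pderiv i p).support, (m.sum fun _ e => e) < p.totalDegree := by
    intro m hm
    rw [mem_support_iff] at hm
    have key := aux_coeff_pderiv p i m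
    have hc : coeff (m + Finsupp.single i 1) p ≠ 0 := by
      intro hc0
      rw [hc0, mul_zero] at key
      exact hm key
    have := le_totalDegree (mem_support_iff.mpr hc)
    have hsum : ((m + Finsupp.single i 1).sum fun _ e => e) = (m.sum fun _ e => e) + 1 := by
      rw [Finsupp.sum_add_index (by simp) (by intros; rfl)]
      simp
    omega
  rw [totalDegree]
  apply Finset.sup_lt_iff ?_ |>.mpr hd
  · rcases Nat.eq_zero_or_pos p.totalDegree with h0 | h0
    · exfalso
      apply h
      ext m
      rw [aux_coeff_pderiv, coeff_zero]
      have hz := (totalDegree_eq_zero_iff _ p).mp h0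
      have : coeff (m + Finsupp.single i 1) p = 0 := by
        by_contra hc
        have := hz _ (mem_support_iff.mpr hc) i
        simp [Finsupp.add_apply, Finsupp.single_apply] at this
      rw [this, mul_zero]
    · exact h0

set_option maxHeartbeats 1000000 in
theorem stmt_17 (k : Type*) [Field k] [CharZero k] (n : ℕ)
    (f : Fin n → MvPolynomial (Fin n) k)
    (hjac : ∃ c : k, c ≠ 0 ∧
      (Matrix.of fun i j => MvPolynomial.pderiv j (f i)).det = MvPolynomial.C c) :
    Algebra.Unramified (Algebra.adjoin k (Set.range f)) (MvPolynomial (Fin n) k) ∧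
    AlgebraicIndependent k f := by
  obtain ⟨c, hc0, hdet⟩ := hjac
  have hJ : IsUnit (Matrix.of fun i j => pderiv j (f i) :
      Matrix (Fin n) (Fin n) (MvPolynomial (Fin n) k)).det := by
    rw [hdet]
    exact (isUnit_iff_ne_zero.mpr hc0).map (MvPolynomial.C (σ := Fin n) : k →+* _)
  have hDS : ∀ x ∈ Algebra.adjoin k (Set.range f),
      KaehlerDifferential.D ↥(Algebra.adjoin k (Set.range f)) (MvPolynomial (Fin n) k) x = 0 := by
    intro x hx
    have hxeq : x = algebraMap ↥(Algebra.adjoin k (Set.range f)) (MvPolynomial (Fin n) k)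
      ⟨x, hx⟩ := rfl
    rw [hxeq, Derivation.map_algebraMap]
  have hA : ∀ p : MvPolynomial (Fin n) k,
      KaehlerDifferential.D ↥(Algebra.adjoin k (Set.range f)) (MvPolynomial (Fin n) k) p
      = ∑ j, pderiv j p •
        KaehlerDifferential.D ↥(Algebra.adjoin k (Set.range f)) (MvPolynomial (Fin n) k) (X j) := by
    intro p
    induction p using MvPolynomial.induction_on with
    | C a =>
        have hmem : (C a : MvPolynomial (Fin n) k) ∈ Algebra.adjoin k (Set.range f) := by
          rw [← MvPolynomial.algebraMap_eq]
          exact Subalgebra.algebraMap_mem _ a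
        rw [hDS _ hmem]
        simp
    | add p q hp hq =>
        simp only [map_add, hp, hq, add_smul, Finset.sum_add_distrib]
    | mul_X p s hp =>
        rw [Derivation.leibniz, hp]
        simp only [Derivation.leibniz, pderiv_X, Pi.single_apply, add_smul, smul_smul,
          Finset.sum_add_distrib, smul_eq_mul, mul_ite, mul_one, mul_zero, ite_smul, zero_smul,
          Finset.sum_ite_eq', Finset.mem_univ, if_true, Finset.smul_sum]
        rw [Finset.sum_ite_eq, if_pos (Finset.mem_univ s), add_comm]
  have hXzero : ∀ j,
      KaehlerDifferential.D ↥(Algebra.adjoin k (Set.range f)) (MvPolynomial (Fin n) k) (X j)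
        = 0 := by
    apply aux_matrix_smul_zero _ hJ
    intro i
    simp only [Matrix.of_apply]
    rw [← hA (f i)]
    exact hDS _ (Algebra.subset_adjoin ⟨i, rfl⟩)
  have hDzero : ∀ p : MvPolynomial (Fin n) k,
      KaehlerDifferential.D ↥(Algebra.adjoin k (Set.range f)) (MvPolynomial (Fin n) k) p = 0 := by
    intro p
    rw [hA p]
    simp [hXzero]
  have hsub : Subsingleton
      (Ω[MvPolynomial (Fin n) k⁄↥(Algebra.adjoin k (Set.range f))]) := by
    have hspan := KaehlerDifferential.span_range_derivation
      ↥(Algebra.adjoin k (Set.range f)) (MvPolynomial (Fin n) k)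
    have hr : Set.range (KaehlerDifferential.D ↥(Algebra.adjoin k (Set.range f))
        (MvPolynomial (Fin n) k)) ⊆ {0} := by
      rintro _ ⟨p, rfl⟩; exact hDzero p
    have htop : (⊤ : Submodule (MvPolynomial (Fin n) k)
        (Ω[MvPolynomial (Fin n) k⁄↥(Algebra.adjoin k (Set.range f))])) ≤ ⊥ := by
      rw [← hspan]
      refine le_trans (Submodule.span_mono hr) ?_
      rw [Submodule.span_zero_singleton]
    refine subsingleton_of_forall_eq 0 fun z => ?_
    simpa using htop (Submodule.mem_top (x := z))
  refine ⟨⟨⟨hsub⟩, Algebra.FiniteType.of_restrictScalars_finiteType k _ _⟩, ?_⟩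
  -- algebraic independence
  rw [algebraicIndependent_iff]
  intro p hp
  suffices H : ∀ d (p : MvPolynomial (Fin n) k), p.totalDegree = d → aeval f p = 0 → p = 0 from
    H _ p rfl hp
  clear hp p
  intro d
  induction d using Nat.strong_induction_on with
  | _ d IH =>
    intro p hd hp
    have hpart : ∀ i, aeval f (pderiv i p) = 0 := by
      apply aux_matrix_smul_zero (Matrix.of fun i j => pderiv j (f i)).transpose
        (by rwa [Matrix.det_transpose])
      intro j
      have hcr := aux_chain f p j
      rw [hp, map_zero] at hcr
      simp only [Matrix.transpose_apply, Matrix.of_apply, smul_eq_mul]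
      have hcomm : ∑ x : Fin n, pderiv j (f x) * aeval f (pderiv x p)
          = ∑ i : Fin n, aeval f (pderiv i p) * pderiv j (f i) :=
        Finset.sum_congr rfl fun i _ => mul_comm _ _
      rw [hcomm, ← hcr]
    have hzero : ∀ i, pderiv i p = 0 := by
      intro i
      by_contra hne
      exact hne (IH _ (hd ▸ aux_totalDegree_pderiv_lt p i hne) _ rfl (hpart i))
    rw [aux_eq_C_of_pderiv p hzero] at hp ⊢
    have hcc : constantCoeff p = 0 := by
      rwa [aeval_C, map_eq_zero_iff _
        ((algebraMap k (MvPolynomial (Fin n) k)).injective)] at hp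
    rw [hcc, map_zero]
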